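/- Fix θ ∈ (1/2,1). For γ ∈ (0,1) let D = 1 − 4γ²θ(1−θ) and ζ_−(γ) = ln((1 − √D)/(2γθ)) / ln((1−θ)/θ). Then ζ_−(γ) → 1 as γ → 1⁻, and more precisely lim_{γ→1⁻} (ζ_−(γ) − 1)/(1−γ) = 1 / ((2θ−1) ln(θ/(1−θ))). -/

import Mathlib

/-!
Asymptotics of the exponent `ζ_−(γ) = ln((1 − √D)/(2γθ)) / ln((1−θ)/θ)` with
`D = 1 − 4γ²θ(1−θ)`: as `γ → 1⁻`, `ζ_−(γ) → 1` and
`(ζ_−(γ) − 1)/(1−γ) → 1/((2θ−1) ln(θ/(1−θ)))`.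
-/

/-- The discriminant `D = 1 − 4γ²θ(1−θ)`. -/
noncomputable def Dq (θ γ : ℝ) : ℝ := 1 - 4 * γ ^ 2 * θ * (1 - θ)

/-- The exponent `ζ_−(γ) = ln((1 − √D)/(2γθ)) / ln((1−θ)/θ)`. -/
noncomputable def zetaMinus (θ γ : ℝ) : ℝ :=
  Real.log ((1 - Real.sqrt (Dq θ γ)) / (2 * γ * θ)) / Real.log ((1 - θ) / θ)

theorem zeta_minus_asymptotics
    (θ : ℝ) (hθ : θ ∈ Set.Ioo (1 / 2 : ℝ) 1) :
    Filter.Tendsto (fun γ => zetaMinus θ γ)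
        (nhdsWithin 1 (Set.Iio (1 : ℝ))) (nhds 1) ∧
      Filter.Tendsto (fun γ => (zetaMinus θ γ - 1) / (1 - γ))
        (nhdsWithin 1 (Set.Iio (1 : ℝ)))
        (nhds (1 / ((2 * θ - 1) * Real.log (θ / (1 - θ))))) := by
  obtain ⟨hθ1, hθ2⟩ := hθ
  have hθ0 : (0:ℝ) < θ := by linarith
  have h1θ : (0:ℝ) < 1 - θ := by linarith
  have hs : (0:ℝ) < 2 * θ - 1 := by linarith
  set L : ℝ := Real.log ((1 - θ) / θ) with hL
  have hLneg : L < 0 := Real.log_neg (by positivity) (by rw [div_lt_one hθ0]; linarith)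
  have hLne : L ≠ 0 := ne_of_lt hLneg
  have hDq1 : Dq θ 1 = (2 * θ - 1) ^ 2 := by unfold Dq; ring
  have hsqrt1 : Real.sqrt (Dq θ 1) = 2 * θ - 1 := by
    rw [hDq1, Real.sqrt_sq hs.le]
  have hDne : Dq θ 1 ≠ 0 := by rw [hDq1]; positivity
  -- derivative of Dq
  have hD : HasDerivAt (fun γ : ℝ => Dq θ γ) (-(8 * θ * (1 - θ))) 1 := by
    have h : HasDerivAt (fun γ : ℝ => 1 - 4 * γ ^ 2 * θ * (1 - θ))
        (-(((4 : ℝ) * ((2 : ℕ) * (1:ℝ) ^ (2 - 1))) * θ * (1 - θ))) 1 :=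
      ((((hasDerivAt_pow 2 (1:ℝ)).const_mul 4).mul_const θ).mul_const (1 - θ)).const_sub 1
    refine h.congr_deriv ?_
    norm_num
  have hsqrt : HasDerivAt (fun γ : ℝ => Real.sqrt (Dq θ γ))
      (1 / (2 * Real.sqrt (Dq θ 1)) * (-(8 * θ * (1 - θ)))) 1 :=
    (Real.hasDerivAt_sqrt hDne).comp 1 hD
  have hnum : HasDerivAt (fun γ : ℝ => 1 - Real.sqrt (Dq θ γ))
      (-(1 / (2 * Real.sqrt (Dq θ 1)) * (-(8 * θ * (1 - θ))))) 1 := hsqrt.const_sub 1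
  have hden : HasDerivAt (fun γ : ℝ => 2 * γ * θ) (2 * 1 * θ) 1 := by
    have := ((hasDerivAt_id (1:ℝ)).const_mul 2).mul_const θ
    exact this
  have hdenne : 2 * (1:ℝ) * θ ≠ 0 := by positivity
  have hg : HasDerivAt (fun γ : ℝ => (1 - Real.sqrt (Dq θ γ)) / (2 * γ * θ))
      ((-(1 / (2 * Real.sqrt (Dq θ 1)) * (-(8 * θ * (1 - θ)))) * (2 * 1 * θ)
        - (1 - Real.sqrt (Dq θ 1)) * (2 * 1 * θ)) / (2 * 1 * θ) ^ 2) 1 :=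
    hnum.div hden hdenne
  have hg1 : (1 - Real.sqrt (Dq θ 1)) / (2 * 1 * θ) = (1 - θ) / θ := by
    rw [hsqrt1]; field_simp; ring
  have hgne : (1 - Real.sqrt (Dq θ 1)) / (2 * 1 * θ) ≠ 0 := by
    rw [hg1]; positivity
  have hlog := hg.log hgne
  have hzeta := hlog.div_const L
  have hzeta' : HasDerivAt (fun γ : ℝ => zetaMinus θ γ) (1 / ((2 * θ - 1) * L)) 1 := by
    refine hzeta.congr_deriv ?_
    symm
    rw [hsqrt1]
    have e1 : θ ≠ 0 := hθ0.ne'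
    have e2 : (1:ℝ) - θ ≠ 0 := h1θ.ne'
    have e3 : 2 * θ - 1 ≠ 0 := hs.ne'
    have e4 : (1:ℝ) - (2 * θ - 1) ≠ 0 := by intro h; apply e2; linarith
    field_simp
    ring
  have hz1 : zetaMinus θ 1 = 1 := by
    unfold zetaMinus
    rw [hsqrt1]
    rw [show (1 - (2 * θ - 1)) / (2 * 1 * θ) = (1 - θ) / θ by field_simp; ring]
    exact div_self hLne
  constructor
  · have := hzeta'.continuousAt.tendsto.mono_left (nhdsWithin_le_nhds (s := Set.Iio (1:ℝ)))
    rwa [hz1] at this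
  · have hslope := hasDerivAt_iff_tendsto_slope.mp hzeta'
    have hmono : nhdsWithin (1:ℝ) (Set.Iio 1) ≤ nhdsWithin 1 {(1:ℝ)}ᶜ :=
      nhdsWithin_mono _ (fun x hx => ne_of_lt hx)
    have h2 := (hslope.mono_left hmono).neg
    have heq : (fun γ : ℝ => (zetaMinus θ γ - 1) / (1 - γ))
        = fun γ => -(slope (zetaMinus θ) 1 γ) := by
      funext γ
      rw [slope_def_field, hz1]
      rw [show (1:ℝ) - γ = -(γ - 1) by ring, div_neg]
    rw [heq]
    convert h2 using 2
    have hlogθ : Real.log (θ / (1 - θ)) = -L := by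
      rw [hL, ← Real.log_inv]
      congr 1
      field_simp
    rw [hlogθ]
    field_simp
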